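/- If A ∈ Fⁿˣⁿ has rank 1, then the kernel of A contains a nonzero vector of Hamming weight at most 2; consequently, C(A,a) contains a nonzero matrix of Hamming weight at most 4, so the minimum distance of C(A,a) is at most 4. -/

import Mathlib

open Finset Matrix

/-- Key lemma: a rank-1 matrix (n ≥ 2) kills a nonzero vector of weight ≤ 2. -/
lemma ker_low_weight {F : Type*} [Field F] [DecidableEq F] {n : ℕ} (hn : 2 ≤ n)
    (A : Matrix (Fin n) (Fin n) F) (hA : A.rank = 1) :
    ∃ v : Fin n → F, v ≠ 0 ∧ A.mulVec v = 0 ∧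
      (Finset.univ.filter fun i => v i ≠ 0).card ≤ 2 := by
  -- A ≠ 0
  have hA0 : A ≠ 0 := by
    rintro rfl
    rw [Matrix.rank_zero] at hA
    exact one_ne_zero hA.symm
  -- find a nonzero column i
  obtain ⟨k, i, hki⟩ : ∃ k i, A k i ≠ 0 := by
    by_contra h
    push_neg at h
    exact hA0 (by ext k i; simpa using h k i)
  set ci : Fin n → F := fun r => A r i with hci
  have hcine : ci ≠ 0 := fun h => hki (congrFun h k)
  -- ci is in the range of mulVecLin
  have hcimem : ci ∈ LinearMap.range A.mulVecLin := by
    refine ⟨Pi.single i 1, ?_⟩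
    simp [Matrix.mulVecLin_apply, Matrix.mulVec_single, hci]
    rfl
  -- range = span {ci}
  have hspanle : Submodule.span F {ci} ≤ LinearMap.range A.mulVecLin := by
    rw [Submodule.span_le, Set.singleton_subset_iff]; exact hcimem
  have hfr : Module.finrank F (LinearMap.range A.mulVecLin) ≤
      Module.finrank F (Submodule.span F {ci}) := by
    rw [finrank_span_singleton hcine]
    exact le_of_eq hA
  have hspan : Submodule.span F {ci} = LinearMap.range A.mulVecLin :=
    Submodule.eq_of_le_of_finrank_le hspanle hfr
  -- pick j ≠ i
  haveI : Nontrivial (Fin n) := Fin.nontrivial_iff_two_le.mpr hn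
  obtain ⟨j, hj⟩ := exists_ne i
  set cj : Fin n → F := fun r => A r j with hcj
  have hcjmem : cj ∈ Submodule.span F {ci} := by
    rw [hspan]
    refine ⟨Pi.single j 1, ?_⟩
    simp [Matrix.mulVecLin_apply, Matrix.mulVec_single, hcj]
    rfl
  obtain ⟨c, hc⟩ := Submodule.mem_span_singleton.mp hcjmem
  refine ⟨c • (Pi.single i 1 : Fin n → F) - (Pi.single j 1 : Fin n → F), ?_, ?_, ?_⟩
  · intro h
    have := congrFun h j
    simp [Pi.single_apply, hj, (Ne.symm hj : i ≠ j)] at this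
  · have : A.mulVec (c • (Pi.single i 1 : Fin n → F) - (Pi.single j 1 : Fin n → F))
        = c • A.mulVec (Pi.single i 1) - A.mulVec (Pi.single j 1) := by
      rw [Matrix.mulVec_sub, Matrix.mulVec_smul]
    rw [this]
    ext r
    have := congrFun hc r
    simp only [Pi.smul_apply, smul_eq_mul] at this
    simp [Matrix.mulVec_single, this, hci, hcj]
    exact sub_eq_zero.mpr this
  · refine le_trans (Finset.card_le_card ?_) (le_trans (Finset.card_insert_le i {j})
      (by simp))
    intro x hx
    simp only [mem_filter, mem_univ, true_and] at hx
    by_contra hxmem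
    simp only [Finset.mem_insert, Finset.mem_singleton, not_or] at hxmem
    apply hx
    simp [Pi.single_apply, hxmem.1, hxmem.2]

theorem stmt_13 {F : Type*} [Field F] [DecidableEq F] {n : ℕ} (hn : 2 ≤ n)
    (A : Matrix (Fin n) (Fin n) F) (hA : A.rank = 1) (a : F) :
    (∃ v : Fin n → F, v ≠ 0 ∧ A.mulVec v = 0 ∧
      (Finset.univ.filter fun i => v i ≠ 0).card ≤ 2) ∧
    (∃ B : Matrix (Fin n) (Fin n) F, B ≠ 0 ∧ A * B = a • (B * A) ∧
      (Finset.univ.filter fun q : Fin n × Fin n => B q.1 q.2 ≠ 0).card ≤ 4) := by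
  obtain ⟨v, hv0, hvker, hvw⟩ := ker_low_weight hn A hA
  have hAT : Aᵀ.rank = 1 := by rw [Matrix.rank_transpose]; exact hA
  obtain ⟨w, hw0, hwker, hww⟩ := ker_low_weight hn Aᵀ hAT
  refine ⟨⟨v, hv0, hvker, hvw⟩, ?_⟩
  refine ⟨Matrix.of (fun p q => v p * w q), ?_, ?_, ?_⟩
  · obtain ⟨p, hp⟩ := Function.ne_iff.mp hv0
    obtain ⟨q, hq⟩ := Function.ne_iff.mp hw0
    intro h
    have := congrFun (congrFun h p) q
    simp only [Matrix.of_apply, Matrix.zero_apply] at this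
    exact (mul_ne_zero hp hq) this
  · have hAB : A * Matrix.of (fun p q => v p * w q) = 0 := by
      ext p q
      have : A.mulVec v p = 0 := congrFun hvker p
      simp only [Matrix.mul_apply, Matrix.of_apply, Matrix.zero_apply]
      calc ∑ k, A p k * (v k * w q) = (∑ k, A p k * v k) * w q := by
            rw [Finset.sum_mul]; exact Finset.sum_congr rfl fun k _ => by ring
        _ = 0 := by
            rw [show (∑ k, A p k * v k) = A.mulVec v p from rfl, this, zero_mul]
    have hBA : Matrix.of (fun p q => v p * w q) * A = 0 := by
      ext p q
      have : Aᵀ.mulVec w q = 0 := congrFun hwker q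
      simp only [Matrix.mul_apply, Matrix.of_apply, Matrix.zero_apply]
      calc ∑ k, v p * w k * A k q = v p * (∑ k, w k * A k q) := by
            rw [Finset.mul_sum]; exact Finset.sum_congr rfl fun k _ => by ring
        _ = 0 := by
            rw [show (∑ k, w k * A k q) = Aᵀ.mulVec w q from ?_, this, mul_zero]
            simp [Matrix.mulVec, dotProduct, Matrix.transpose_apply]
            exact Finset.sum_congr rfl fun k _ => by ring
    rw [hAB, hBA, smul_zero]
  · calc (Finset.univ.filter fun q : Fin n × Fin n =>
        Matrix.of (fun p q => v p * w q) q.1 q.2 ≠ 0).card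
        ≤ ((Finset.univ.filter fun i => v i ≠ 0) ×ˢ
           (Finset.univ.filter fun i => w i ≠ 0)).card := by
          apply Finset.card_le_card
          intro x hx
          simp only [mem_filter, mem_univ, true_and, Matrix.of_apply] at hx
          simp only [Finset.mem_product, mem_filter, mem_univ, true_and]
          exact ⟨left_ne_zero_of_mul (Finset.mem_filter.mp hx).2, right_ne_zero_of_mul (Finset.mem_filter.mp hx).2⟩
      _ ≤ 4 := by
          rw [Finset.card_product]
          calc _ ≤ 2 * 2 := Nat.mul_le_mul hvw hww
            _ = 4 := rfl
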